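/- Let q be a prime power and m ≥ 2, with q ≥ m − 1. Let z ∈ F_{q^m} satisfy F_q(z) = F_{q^m}, let ν ≥ 1 with gcd(ν, m) = 1, let 1 ≤ n ≤ m − 1, and let d = 1 + q^ν + ⋯ + q^{(n−1)ν}. Then the point set ℓ^d = {⟨(μ + λ z)^d⟩_{F_q} : (μ, λ) ∈ F_q² \ {(0,0)}} is a normal rational curve of order n in an n-dimensional projective subspace of PG(m−1, q): that is, there is an F_q-linear isomorphism from F_q^{n+1} onto the F_q-span of ℓ^d taking the standard rational normal curve {⟨(1, λ, λ², …, λⁿ)⟩ : λ ∈ F_q} ∪ {⟨(0,…,0,1)⟩} onto ℓ^d. -/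

import Mathlib

open Polynomial Finset

namespace Stmt7Aux

variable {q ν m : ℕ} {F K : Type*} [Field F] [Field K] [Algebra F K] [Fintype F] [Fintype K]

lemma frob_add (hF : Fintype.card F = q) (c : ℕ) (x y : K) :
    (x + y) ^ q ^ c = x ^ q ^ c + y ^ q ^ c := by
  have : CharP F (ringChar F) := ringChar.charP F
  obtain ⟨s, hp, hcard⟩ := FiniteField.card F (ringChar F)
  haveI : CharP K (ringChar F) := charP_of_injective_ringHom (algebraMap F K).injective _
  haveI := Fact.mk hp
  have hq : q = ringChar F ^ (s : ℕ) := by rw [← hF, hcard]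
  rw [hq, ← pow_mul]
  exact add_pow_char_pow x y (ringChar F) (↑s * c)

lemma frob_alg (hF : Fintype.card F = q) (c : ℕ) (a : F) :
    (algebraMap F K a) ^ q ^ c = algebraMap F K a := by
  rw [← map_pow]
  congr 1
  rw [← hF]
  exact FiniteField.pow_card_pow c a

variable (ν) in
noncomputable def frobAlg (hF : Fintype.card F = q) : K →ₐ[F] K where
  toFun x := x ^ q ^ ν
  map_one' := one_pow _
  map_mul' x y := mul_pow x y _
  map_zero' := zero_pow (pow_ne_zero ν (by
    have := Fintype.one_lt_card (α := F); omega))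
  map_add' := frob_add hF ν
  commutes' := frob_alg hF ν

lemma adjoin_frob (hF : Fintype.card F = q) (w : K) (hw : Algebra.adjoin F ({w} : Set K) = ⊤) :
    Algebra.adjoin F ({w ^ q ^ ν} : Set K) = ⊤ := by
  have hsurj : Function.Surjective (frobAlg ν hF : K →ₐ[F] K) :=
    Finite.injective_iff_surjective.mp (fun x y h => (frobAlg ν hF).toRingHom.injective h)
  have : Algebra.adjoin F ((frobAlg ν hF : K →ₐ[F] K) '' {w}) = ⊤ := by
    rw [← AlgHom.map_adjoin, hw, Algebra.map_top, AlgHom.range_eq_top]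
    exact hsurj
  simp only [Set.image_singleton] at this
  exact this

lemma frob_fix_ne (hq2 : 2 ≤ q) (hF : Fintype.card F = q) (hK : Fintype.card K = q ^ m)
    (hm : 2 ≤ m) (hcop : Nat.gcd ν m = 1) (w : K) (hw : Algebra.adjoin F ({w} : Set K) = ⊤)
    (k : ℕ) (hk1 : 1 ≤ k) (hk2 : k ≤ m - 1) : w ^ q ^ (ν * k) ≠ w := by
  intro hfix
  set e := ν * k with he
  have hS : ∀ x : K, x ^ q ^ e = x := by
    let S : Subalgebra F K :=
      { carrier := {x : K | x ^ q ^ e = x}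
        mul_mem' := fun {x y} hx hy => by
          simp only [Set.mem_setOf_eq] at *
          rw [mul_pow, hx, hy]
        one_mem' := by simp
        add_mem' := fun {x y} hx hy => by
          simp only [Set.mem_setOf_eq] at *
          rw [frob_add hF, hx, hy]
        zero_mem' := by
          simp only [Set.mem_setOf_eq]
          exact zero_pow (pow_ne_zero e (by omega))
        algebraMap_mem' := fun a => frob_alg hF e a }
    intro x
    have htop : (⊤ : Subalgebra F K) ≤ S := by
      rw [← hw]
      exact Algebra.adjoin_le (by simpa [S] using hfix)
    exact htop (Algebra.mem_top)
  have hm0 : ∀ x : K, x ^ q ^ m = x := fun x => by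
    rw [← hK]; exact FiniteField.pow_card x
  have key : ∀ t, ∀ x : K, x ^ q ^ (m * t) = x := by
    intro t
    induction t with
    | zero => simp
    | succ t ih =>
      intro x
      have h1 : q ^ (m * (t + 1)) = q ^ (m * t) * q ^ m := by
        rw [← pow_add]; ring_nf
      rw [h1, pow_mul, hm0, ih]
  have hmod : ∀ x : K, x ^ q ^ (e % m) = x := by
    intro x
    conv_rhs => rw [← hS x]
    conv_rhs => rw [← Nat.div_add_mod e m]
    rw [pow_add, pow_mul, key]
  have hr0 : e % m ≠ 0 := by
    intro h
    have hmdvd : m ∣ e := Nat.dvd_of_mod_eq_zero h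
    have hcop' : Nat.Coprime m ν := (Nat.coprime_iff_gcd_eq_one.mpr hcop).symm
    rw [he] at hmdvd
    have : m ∣ k := hcop'.dvd_of_dvd_mul_left hmdvd
    have := Nat.le_of_dvd (by omega) this
    omega
  have hrm : e % m < m := Nat.mod_lt _ (by omega)
  obtain ⟨ζ, hζ⟩ := IsCyclic.exists_generator (α := Kˣ)
  have hord : orderOf ζ = q ^ m - 1 := by
    rw [orderOf_eq_card_of_forall_mem_zpowers hζ, Nat.card_units,
      Nat.card_eq_fintype_card, hK]
  have hζK : (ζ : K) ^ q ^ (e % m) = ζ := hmod ζ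
  have hζfix : ζ ^ (q ^ (e % m) - 1) = 1 := by
    have h2 : ζ ^ q ^ (e % m) = ζ := Units.ext (by push_cast; exact hζK)
    have h3 : ζ ^ (q ^ (e % m) - 1) * ζ = ζ := by
      rw [← pow_succ, Nat.sub_add_cancel (Nat.one_le_pow _ _ (by omega))]
      exact h2
    have h4 : ζ ^ (q ^ (e % m) - 1) * ζ = 1 * ζ := by rw [h3, one_mul]
    exact mul_right_cancel h4
  have hdvd : q ^ m - 1 ∣ q ^ (e % m) - 1 := hord ▸ orderOf_dvd_of_pow_eq_one hζfix
  have h1 : 0 < q ^ (e % m) - 1 := by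
    have : 1 < q ^ (e % m) := Nat.one_lt_pow hr0 (by omega)
    omega
  have hle := Nat.le_of_dvd h1 hdvd
  have h2 : q ^ m ≤ q ^ (e % m) := by
    have h3 : 1 ≤ q ^ m := Nat.one_le_pow _ _ (by omega)
    omega
  have := (Nat.pow_le_pow_iff_right (by omega : 1 < q)).mp h2
  omega

variable (q ν) in
noncomputable def polB (w : K) (k : ℕ) : K[X] :=
  ∏ i ∈ Finset.range k, (1 + C (w ^ q ^ (ν * i)) * X)

lemma polB_natDegree_le (w : K) (k : ℕ) : (polB q ν w k).natDegree ≤ k := by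
  calc (polB q ν w k).natDegree
      ≤ ∑ i ∈ range k, (1 + C (w ^ q ^ (ν * i)) * X : K[X]).natDegree :=
        natDegree_prod_le _ _
    _ ≤ ∑ _i ∈ range k, 1 := Finset.sum_le_sum fun i _ => by compute_degree
    _ = k := by simp

lemma polB_coeff_zero (w : K) (k : ℕ) : (polB q ν w k).coeff 0 = 1 := by
  rw [coeff_zero_eq_eval_zero]
  simp [polB, eval_prod]

lemma polB_coeff_top (w : K) (k : ℕ) :
    (polB q ν w k).coeff k = ∏ i ∈ range k, w ^ q ^ (ν * i) := by
  induction k with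
  | zero => simp [polB]
  | succ k ih =>
    rw [show polB q ν w (k + 1)
        = polB q ν w k + C (w ^ q ^ (ν * k)) * (X * polB q ν w k) by
      rw [polB, Finset.prod_range_succ, ← polB]; ring]
    rw [coeff_add, coeff_C_mul, coeff_X_mul,
      coeff_eq_zero_of_natDegree_lt (lt_of_le_of_lt (polB_natDegree_le w k) (Nat.lt_succ_self k)),
      ih, Finset.prod_range_succ, zero_add]
    ring

lemma polB_eval (w : K) (k : ℕ) (x : K) :
    (polB q ν w k).eval x = ∏ i ∈ range k, (1 + w ^ q ^ (ν * i) * x) := by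
  simp [polB, eval_prod]

lemma pow_frob (w : K) (i : ℕ) : (w ^ q ^ ν) ^ q ^ (ν * i) = w ^ q ^ (ν * (i + 1)) := by
  rw [← pow_mul, ← pow_add]
  congr 1
  ring

lemma polB_succ' (w : K) (k : ℕ) :
    polB q ν w (k + 1) = polB q ν (w ^ q ^ ν) k * (1 + C w * X) := by
  rw [polB, Finset.prod_range_succ']
  congr 1
  · refine Finset.prod_congr rfl fun i _ => ?_
    rw [pow_frob]
  · simp

lemma polB_map (hF : Fintype.card F = q) (w : K) (k : ℕ) :
    (polB q ν w k).map ((frobAlg ν hF : K →ₐ[F] K) : K →+* K) = polB q ν (w ^ q ^ ν) k := by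
  rw [polB, Polynomial.map_prod]
  refine Finset.prod_congr rfl fun i _ => ?_
  rw [Polynomial.map_add, Polynomial.map_one, Polynomial.map_mul, map_C, map_X]
  congr 3
  show (w ^ q ^ (ν * i)) ^ q ^ ν = (w ^ q ^ ν) ^ q ^ (ν * i)
  rw [← pow_mul, ← pow_mul, ← pow_add, ← pow_add]
  congr 1
  ring

lemma ind (hq2 : 2 ≤ q) (hF : Fintype.card F = q) (hK : Fintype.card K = q ^ m)
    (hm : 2 ≤ m) (hcop : Nat.gcd ν m = 1) :
    ∀ k, k ≤ m - 1 → ∀ w : K, Algebra.adjoin F ({w} : Set K) = ⊤ →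
    ∀ c : ℕ → F, (∑ j ∈ range (k + 1), algebraMap F K (c j) * (polB q ν w k).coeff j = 0) →
    ∀ j, j ≤ k → c j = 0 := by
  intro k
  induction k with
  | zero =>
    intro _ w hw c hc j hj
    obtain rfl : j = 0 := by omega
    have h1 : (polB q ν w 0).coeff 0 = 1 := polB_coeff_zero w 0
    rw [Finset.sum_range_one, h1, mul_one] at hc
    exact (algebraMap F K).injective (by rw [hc, map_zero])
  | succ k IH =>
    intro hk w hw c hc j hj
    set σ : K →ₐ[F] K := frobAlg ν hF with hσdef
    have hc2 : ∑ j ∈ range (k + 2),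
        algebraMap F K (c j) * (polB q ν (w ^ q ^ ν) (k + 1)).coeff j = 0 := by
      have h0 := congrArg σ hc
      rw [map_sum, map_zero] at h0
      rw [← h0]
      refine Finset.sum_congr rfl fun i _ => ?_
      rw [map_mul, AlgHom.commutes]
      congr 1
      rw [← polB_map hF, Polynomial.coeff_map]
      rfl
    have hdelta : (w ^ q ^ (ν * (k + 1)) - w) ≠ 0 :=
      sub_ne_zero.mpr (frob_fix_ne hq2 hF hK hm hcop w hw (k + 1) (by omega) hk)
    have hpoly : polB q ν (w ^ q ^ ν) (k + 1) - polB q ν w (k + 1)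
        = C (w ^ q ^ (ν * (k + 1)) - w) * (X * polB q ν (w ^ q ^ ν) k) := by
      rw [show polB q ν (w ^ q ^ ν) (k + 1)
          = polB q ν (w ^ q ^ ν) k * (1 + C ((w ^ q ^ ν) ^ q ^ (ν * k)) * X) from by
        rw [polB, Finset.prod_range_succ, ← polB], polB_succ' w k, pow_frob, map_sub]
      ring
    have hdiff : ∀ jj, (polB q ν (w ^ q ^ ν) (k + 1)).coeff jj
        - (polB q ν w (k + 1)).coeff jj
        = (w ^ q ^ (ν * (k + 1)) - w) * ((X * polB q ν (w ^ q ^ ν) k).coeff jj) := by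
      intro jj
      rw [← coeff_sub, hpoly, coeff_C_mul]
    have h0 : ∑ jj ∈ range (k + 2), algebraMap F K (c jj) *
        ((polB q ν (w ^ q ^ ν) (k + 1)).coeff jj - (polB q ν w (k + 1)).coeff jj) = 0 := by
      simp only [mul_sub]
      rw [Finset.sum_sub_distrib, hc2, hc, sub_zero]
    have hsum : ∑ jj ∈ range (k + 2),
        algebraMap F K (c jj) * ((X * polB q ν (w ^ q ^ ν) k).coeff jj) = 0 := by
      simp only [hdiff, mul_left_comm] at h0
      rw [← Finset.mul_sum] at h0
      exact (mul_eq_zero.mp h0).resolve_left hdelta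
    have hsum2 : ∑ i ∈ range (k + 1),
        algebraMap F K (c (i + 1)) * (polB q ν (w ^ q ^ ν) k).coeff i = 0 := by
      rw [Finset.sum_range_succ'] at hsum
      simpa [Polynomial.mul_coeff_zero, coeff_X_mul] using hsum
    have hw' : Algebra.adjoin F ({w ^ q ^ ν} : Set K) = ⊤ := adjoin_frob hF w hw
    have hind := IH (by omega) (w ^ q ^ ν) hw' (fun i => c (i + 1)) hsum2
    match j with
    | (jj + 1) => exact hind jj (by omega)
    | 0 =>
      rw [Finset.sum_range_succ'] at hc
      have hz0 : ∀ i ∈ range (k + 1),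
          algebraMap F K (c (i + 1)) * (polB q ν w (k + 1)).coeff (i + 1) = 0 := by
        intro i hi
        have hci : c (i + 1) = 0 := hind i (Nat.lt_succ_iff.mp (Finset.mem_range.mp hi))
        rw [hci, map_zero, zero_mul]
      rw [Finset.sum_eq_zero hz0, zero_add, polB_coeff_zero, mul_one] at hc
      exact (algebraMap F K).injective (by rw [hc, map_zero])

end Stmt7Aux

open Stmt7Aux

theorem stmt7 (q m ν n : ℕ) (hq : IsPrimePow q) (hm : 2 ≤ m) (hqm : m - 1 ≤ q)
    (F K : Type*) [Field F] [Field K] [Algebra F K] [Fintype F] [Fintype K]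
    (hF : Fintype.card F = q) (hK : Fintype.card K = q ^ m)
    (z : K) (hz : Algebra.adjoin F ({z} : Set K) = ⊤)
    (hν : 1 ≤ ν) (hcop : Nat.gcd ν m = 1) (hn : 1 ≤ n) (hnm : n ≤ m - 1)
    (d : ℕ) (hd : d = ∑ i ∈ Finset.range n, q ^ (ν * i)) :
    ∃ φ : (Fin (n + 1) → F) →ₗ[F] K, Function.Injective φ ∧
      (fun v : Fin (n + 1) → F => Submodule.span F {φ v}) ''
        ({v : Fin (n + 1) → F | ∃ lam : F, v = fun i : Fin (n + 1) => lam ^ i.val} ∪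
          {(fun i : Fin (n + 1) => if i.val = n then 1 else 0)}) =
      {P : Submodule F K | ∃ a b : F, (a, b) ≠ 0 ∧
        P = Submodule.span F {(algebraMap F K a + algebraMap F K b * z) ^ d}} := by
  classical
  have hq2 : 2 ≤ q := hq.two_le
  let φ : (Fin (n + 1) → F) →ₗ[F] K :=
    { toFun := fun v => ∑ j : Fin (n + 1), algebraMap F K (v j) * (polB q ν z n).coeff j
      map_add' := fun v w => by
        simp [map_add, add_mul, Finset.sum_add_distrib]
      map_smul' := fun a v => by
        simp [Algebra.smul_def, Finset.mul_sum, mul_assoc] }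
  have hφ : ∀ v, φ v = ∑ j : Fin (n + 1), algebraMap F K (v j) * (polB q ν z n).coeff j :=
    fun v => rfl
  have hinj0 : ∀ v : Fin (n + 1) → F, φ v = 0 → v = 0 := by
    intro v hv
    rw [hφ] at hv
    set c : ℕ → F := fun j => if h : j < n + 1 then v ⟨j, h⟩ else 0 with hcdef
    have hsum : ∑ j ∈ range (n + 1), algebraMap F K (c j) * (polB q ν z n).coeff j = 0 := by
      rw [← Fin.sum_univ_eq_sum_range (fun j => algebraMap F K (c j) * (polB q ν z n).coeff j)
        (n + 1), ← hv]
      refine Finset.sum_congr rfl fun j _ => ?_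
      congr 1
      simp [hcdef, j.isLt]
      intro h
      have := j.isLt
      exact absurd h (by omega)
    have hall := ind hq2 hF hK hm hcop n hnm z hz c hsum
    funext j
    have hj := hall j (by omega)
    simp [hcdef, j.isLt] at hj
    have := j.isLt
    exact hj (by omega)
  have hinj : Function.Injective φ := by
    intro v w hvw
    have h0 : φ (v - w) = 0 := by rw [map_sub, hvw, sub_self]
    have := hinj0 _ h0
    rwa [sub_eq_zero] at this
  have hexpand : ∀ a b : F, (algebraMap F K a + algebraMap F K b * z) ^ d
      = ∏ i ∈ range n, (algebraMap F K a + algebraMap F K b * z ^ q ^ (ν * i)) := by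
    intro a b
    rw [hd, ← Finset.prod_pow_eq_pow_sum]
    refine Finset.prod_congr rfl fun i _ => ?_
    rw [frob_add hF, mul_pow, frob_alg hF, frob_alg hF]
  have hφ_lam : ∀ lam : F, φ (fun i : Fin (n + 1) => lam ^ i.val)
      = (algebraMap F K 1 + algebraMap F K lam * z) ^ d := by
    intro lam
    have h1 : (polB q ν z n).eval (algebraMap F K lam)
        = ∏ i ∈ range n, (algebraMap F K 1 + algebraMap F K lam * z ^ q ^ (ν * i)) := by
      rw [polB_eval]
      refine Finset.prod_congr rfl fun i _ => ?_
      rw [map_one]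
      ring
    have h2 : (polB q ν z n).eval (algebraMap F K lam)
        = ∑ j ∈ range (n + 1), (polB q ν z n).coeff j * (algebraMap F K lam) ^ j :=
      eval_eq_sum_range' (lt_of_le_of_lt (polB_natDegree_le z n) (Nat.lt_succ_self n)) _
    rw [hφ, hexpand, ← h1, h2,
      ← Fin.sum_univ_eq_sum_range (fun j => (polB q ν z n).coeff j * (algebraMap F K lam) ^ j)
        (n + 1)]
    refine Finset.sum_congr rfl fun j _ => ?_
    rw [map_pow]
    ring
  have hφ_last : φ (fun i : Fin (n + 1) => if i.val = n then 1 else 0) = z ^ d := by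
    rw [hφ]
    have hstep : ∀ j : Fin (n + 1),
        algebraMap F K (if (j : ℕ) = n then (1 : F) else 0) * (polB q ν z n).coeff j
        = if j = Fin.last n then (polB q ν z n).coeff j else 0 := by
      intro j
      by_cases h : (j : ℕ) = n
      · rw [if_pos h, if_pos (Fin.ext h), map_one, one_mul]
      · rw [if_neg h, if_neg (fun hh => h (by rw [hh]; rfl)), map_zero, zero_mul]
    rw [Finset.sum_congr rfl (fun j _ => hstep j), Fintype.sum_ite_eq' (Fin.last n)]
    show (polB q ν z n).coeff n = z ^ d
    rw [polB_coeff_top, Finset.prod_pow_eq_pow_sum, ← hd]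
  have hscale : ∀ cc : F, cc ≠ 0 → ∀ x : K,
      Submodule.span F {algebraMap F K cc * x} = Submodule.span F {x} := by
    intro cc hcc x
    rw [← Algebra.smul_def]
    exact Submodule.span_singleton_smul_eq (isUnit_iff_ne_zero.mpr hcc) x
  have hgen : ∀ a b : F, a ≠ 0 →
      Submodule.span F {(algebraMap F K a + algebraMap F K b * z) ^ d}
      = Submodule.span F {φ (fun i : Fin (n + 1) => (b / a) ^ i.val)} := by
    intro a b ha
    rw [hφ_lam]
    have hab : algebraMap F K a * algebraMap F K (b / a) = algebraMap F K b := by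
      rw [← map_mul]
      congr 1
      field_simp
    have hkey : (algebraMap F K a + algebraMap F K b * z) ^ d
        = algebraMap F K (a ^ n) * (algebraMap F K 1 + algebraMap F K (b / a) * z) ^ d := by
      rw [hexpand, hexpand, map_pow,
        show (algebraMap F K a) ^ n = ∏ _i ∈ range n, algebraMap F K a by
          rw [Finset.prod_const, Finset.card_range],
        ← Finset.prod_mul_distrib]
      refine Finset.prod_congr rfl fun i _ => ?_
      rw [map_one, mul_add, mul_one, ← mul_assoc, hab]
    rw [hkey, hscale (a ^ n) (pow_ne_zero n ha)]
  refine ⟨φ, hinj, ?_⟩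
  ext P
  constructor
  · rintro ⟨v, hv, rfl⟩
    rcases hv with ⟨lam, rfl⟩ | hv
    · exact ⟨1, lam, by simp [Prod.ext_iff], by beta_reduce; rw [hφ_lam]⟩
    · have hv' : v = fun i : Fin (n + 1) => if i.val = n then 1 else 0 := hv
      refine ⟨0, 1, by simp [Prod.ext_iff], ?_⟩
      beta_reduce
      rw [hv', hφ_last]
      simp
  · rintro ⟨a, b, hab, rfl⟩
    by_cases ha : a = 0
    · subst ha
      have hb : b ≠ 0 := by
        intro hb0
        exact hab (by rw [hb0]; rfl)
      refine ⟨(fun i : Fin (n + 1) => if i.val = n then 1 else 0), Or.inr rfl, ?_⟩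
      beta_reduce
      rw [hφ_last]
      have hkey : (algebraMap F K 0 + algebraMap F K b * z) ^ d
          = algebraMap F K (b ^ d) * z ^ d := by
        rw [map_zero, zero_add, mul_pow, map_pow]
      rw [hkey, hscale _ (pow_ne_zero d hb)]
    · refine ⟨(fun i : Fin (n + 1) => (b / a) ^ i.val), Or.inl ⟨b / a, rfl⟩, ?_⟩
      beta_reduce
      exact (hgen a b ha).symm
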